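/- Let a₊, a₋ ∈ (0,2)\{1}, let C₊, C₋, λ₊, λ₋, μ₊, μ₋ > 0, T > 0 and α ∈ (−1,1), and set p = (1−α)/2, q = (1+α)/2. Define r : ℝ → ℝ by r(x) = exp(−(λ₊−μ₊)x²/2) for x > 0 and r(x) = exp(−(λ₋−μ₋)x²/2) for x < 0, and let ℓ̃ be the RDTS Lévy density with parameters (a₊, a₋, C₊, C₋, μ₊, μ₋). Then (4T/(1−α²))·∫_ℝ (p·r(x) + q − r(x)^p)·ℓ̃(x) dx = (4T/(1−α²))·[ 2^{−1−a₊/2}·C₊·Γ(−a₊/2)·(p·λ₊^{a₊/2} + q·μ₊^{a₊/2} − (pλ₊+qμ₊)^{a₊/2}) + 2^{−1−a₋/2}·C₋·Γ(−a₋/2)·(p·λ₋^{a₋/2} + q·μ₋^{a₋/2} − (pλ₋+qμ₋)^{a₋/2}) ]. -/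

import Mathlib

open MeasureTheory Real Set

section Helpers
open Filter Topology

lemma exp_diff_le_aux {s t u : ℝ} (hs : 0 ≤ s) (hu : 0 ≤ u) (hst : s ≤ t) :
    exp (-(s*u)) - exp (-(t*u)) ≤ (t - s) * u := by
  have h1 : exp (-(s*u)) ≤ 1 := exp_le_one_iff.2 (by nlinarith)
  have h3 : 1 - exp (-((t-s)*u)) ≤ (t-s)*u := by
    have := add_one_le_exp (-((t-s)*u)); linarith
  have h2 : 0 ≤ 1 - exp (-((t-s)*u)) := by
    have : exp (-((t-s)*u)) ≤ 1 := exp_le_one_iff.2 (by nlinarith)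
    linarith
  have key : exp (-(s*u)) - exp (-(t*u)) = exp (-(s*u)) * (1 - exp (-((t-s)*u))) := by
    rw [mul_sub, mul_one, ← exp_add]; ring_nf
  rw [key]
  calc exp (-(s*u)) * (1 - exp (-((t-s)*u))) ≤ 1 * ((t-s)*u) :=
        mul_le_mul h1 h3 h2 zero_le_one
    _ = (t-s)*u := one_mul _

lemma abs_exp_diff (s t u : ℝ) (hs : 0 ≤ s) (ht : 0 ≤ t) (hu : 0 ≤ u) :
    |exp (-(s*u)) - exp (-(t*u))| ≤ |s - t| * u := by
  rcases le_total s t with h | h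
  · have h2 : exp (-(t*u)) ≤ exp (-(s*u)) := exp_le_exp.2 (by nlinarith)
    rw [abs_of_nonneg (sub_nonneg.2 h2), abs_sub_comm, abs_of_nonneg (sub_nonneg.2 h)]
    exact exp_diff_le_aux hs hu h
  · have h2 : exp (-(s*u)) ≤ exp (-(t*u)) := exp_le_exp.2 (by nlinarith)
    rw [abs_sub_comm, abs_of_nonneg (sub_nonneg.2 h2), abs_of_nonneg (sub_nonneg.2 h)]
    exact exp_diff_le_aux ht hu h

lemma exp_sq_le_one (θ x : ℝ) (hθ : 0 ≤ θ) : exp (-(θ * x ^ 2 / 2)) ≤ 1 :=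
  exp_le_one_iff.2 (by nlinarith [sq_nonneg x])

section Key
variable {a A B C p q : ℝ}

lemma N_bound (hA : 0 < A) (hB : 0 < B) (hC : 0 < C) (hp : 0 < p) (hq : 0 < q)
    (hpq : p + q = 1) (x : ℝ) :
    |p * exp (-(A * x ^ 2 / 2)) + q * exp (-(B * x ^ 2 / 2)) - exp (-(C * x ^ 2 / 2))|
      ≤ (p * |A - C| + q * |B - C|) / 2 * x ^ 2 := by
  have hu : (0:ℝ) ≤ x ^ 2 / 2 := by positivity
  have h1 := abs_exp_diff A C (x ^ 2 / 2) hA.le hC.le hu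
  have h2 := abs_exp_diff B C (x ^ 2 / 2) hB.le hC.le hu
  have e1 : A * (x ^ 2 / 2) = A * x ^ 2 / 2 := by ring
  have e2 : B * (x ^ 2 / 2) = B * x ^ 2 / 2 := by ring
  have e3 : C * (x ^ 2 / 2) = C * x ^ 2 / 2 := by ring
  rw [e1, e3] at h1; rw [e2, e3] at h2
  have key : p * exp (-(A * x ^ 2 / 2)) + q * exp (-(B * x ^ 2 / 2)) - exp (-(C * x ^ 2 / 2))
      = p * (exp (-(A * x ^ 2 / 2)) - exp (-(C * x ^ 2 / 2)))
        + q * (exp (-(B * x ^ 2 / 2)) - exp (-(C * x ^ 2 / 2))) := by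
    have : q = 1 - p := by linarith
    rw [this]; ring
  rw [key]
  calc |p * (exp (-(A * x ^ 2 / 2)) - exp (-(C * x ^ 2 / 2)))
        + q * (exp (-(B * x ^ 2 / 2)) - exp (-(C * x ^ 2 / 2)))|
      ≤ |p * (exp (-(A * x ^ 2 / 2)) - exp (-(C * x ^ 2 / 2)))|
        + |q * (exp (-(B * x ^ 2 / 2)) - exp (-(C * x ^ 2 / 2)))| := abs_add_le _ _
    _ = p * |exp (-(A * x ^ 2 / 2)) - exp (-(C * x ^ 2 / 2))|
        + q * |exp (-(B * x ^ 2 / 2)) - exp (-(C * x ^ 2 / 2))| := by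
        rw [abs_mul, abs_mul, abs_of_pos hp, abs_of_pos hq]
    _ ≤ p * (|A - C| * (x ^ 2 / 2)) + q * (|B - C| * (x ^ 2 / 2)) := by
        gcongr
    _ = (p * |A - C| + q * |B - C|) / 2 * x ^ 2 := by ring

lemma key_cont (ha0 : 0 < a)  :
    ContinuousOn (fun x : ℝ => (p * exp (-(A * x ^ 2 / 2)) + q * exp (-(B * x ^ 2 / 2))
        - exp (-(C * x ^ 2 / 2))) * x ^ (-a - 1)) (Ioi 0) := by
  apply ContinuousOn.mul
  · apply Continuous.continuousOn
    continuity
  · intro x hx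
    exact (Real.continuousAt_rpow_const x _ (Or.inl (ne_of_gt hx))).continuousWithinAt

lemma key_integrable (ha0 : 0 < a) (ha2 : a < 2)
    (hA : 0 < A) (hB : 0 < B) (hC : 0 < C) (hp : 0 < p) (hq : 0 < q) (hpq : p + q = 1) :
    IntegrableOn (fun x : ℝ => (p * exp (-(A * x ^ 2 / 2)) + q * exp (-(B * x ^ 2 / 2))
        - exp (-(C * x ^ 2 / 2))) * x ^ (-a - 1)) (Ioi 0) := by
  set K : ℝ := (p * |A - C| + q * |B - C|) / 2 with hK
  have hcont := key_cont (A := A) (B := B) (C := C) (p := p) (q := q) ha0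
  rw [← Ioc_union_Ioi_eq_Ioi (zero_le_one (α := ℝ)), integrableOn_union]
  constructor
  · -- on Ioc 0 1, bound by K * x ^ (1 - a)
    have hbd : Integrable (fun x : ℝ => K * x ^ (1 - a)) (volume.restrict (Ioc (0:ℝ) 1)) := by
      have h1 : IntegrableOn (fun x : ℝ => x ^ (1 - a)) (Ioc (0:ℝ) 1) := by
        rw [← intervalIntegrable_iff_integrableOn_Ioc_of_le zero_le_one]
        exact intervalIntegral.intervalIntegrable_rpow' (by linarith)
      exact h1.const_mul K
    refine Integrable.mono' hbd
      ((hcont.mono (Ioc_subset_Ioi_self.trans (by intro x hx; exact hx))).aestronglyMeasurable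
        measurableSet_Ioc) ?_
    filter_upwards [ae_restrict_mem measurableSet_Ioc] with x hx
    have hx0 : 0 < x := hx.1
    have hxp : (0:ℝ) < x ^ (-a - 1) := rpow_pos_of_pos hx0 _
    rw [norm_mul, norm_eq_abs, norm_eq_abs, abs_of_pos hxp]
    have hN := N_bound hA hB hC hp hq hpq x
    have hpow : x ^ 2 * x ^ (-a - 1) = x ^ (1 - a) := by
      rw [← rpow_two, ← rpow_add hx0]; congr 1; push_cast; ring
    calc |p * exp (-(A * x ^ 2 / 2)) + q * exp (-(B * x ^ 2 / 2)) - exp (-(C * x ^ 2 / 2))|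
          * x ^ (-a - 1) ≤ (K * x ^ 2) * x ^ (-a - 1) := by gcongr
      _ = K * x ^ (1 - a) := by rw [mul_assoc, hpow]
  · -- on Ioi 1, bound by (p+q+1) * exp (-(m/2) * x^2)
    set m : ℝ := min A (min B C) with hm
    have hm0 : 0 < m := lt_min hA (lt_min hB hC)
    have hbd : Integrable (fun x : ℝ => (p + q + 1) * exp (-(m/2) * x ^ 2))
        (volume.restrict (Ioi (1:ℝ))) := by
      exact ((integrable_exp_neg_mul_sq (by linarith : (0:ℝ) < m/2)).integrableOn).const_mul _
    refine Integrable.mono' hbd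
      ((hcont.mono (Ioi_subset_Ioi zero_le_one)).aestronglyMeasurable
        measurableSet_Ioi) ?_
    filter_upwards [ae_restrict_mem measurableSet_Ioi] with x hx
    have hx1 : (1:ℝ) < x := hx
    have hx0 : 0 < x := lt_trans one_pos hx1
    have hxp : (0:ℝ) < x ^ (-a - 1) := rpow_pos_of_pos hx0 _
    have hxle : x ^ (-a - 1) ≤ 1 :=
      rpow_le_one_of_one_le_of_nonpos hx1.le (by linarith)
    rw [norm_mul, norm_eq_abs, norm_eq_abs, abs_of_pos hxp]
    have hsq : (0:ℝ) ≤ x ^ 2 := sq_nonneg x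
    have eA : exp (-(A * x ^ 2 / 2)) ≤ exp (-(m/2) * x ^ 2) := by
      apply exp_le_exp.2; nlinarith [min_le_left A (min B C)]
    have eB : exp (-(B * x ^ 2 / 2)) ≤ exp (-(m/2) * x ^ 2) := by
      apply exp_le_exp.2
      nlinarith [(min_le_right A (min B C)).trans (min_le_left B C), min_le_right B C]
    have eC : exp (-(C * x ^ 2 / 2)) ≤ exp (-(m/2) * x ^ 2) := by
      apply exp_le_exp.2
      nlinarith [(min_le_right A (min B C)).trans (min_le_right B C)]
    have hNle : |p * exp (-(A * x ^ 2 / 2)) + q * exp (-(B * x ^ 2 / 2))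
        - exp (-(C * x ^ 2 / 2))| ≤ (p + q + 1) * exp (-(m/2) * x ^ 2) := by
      rw [abs_le]
      constructor <;> nlinarith [exp_pos (-(A * x ^ 2 / 2)), exp_pos (-(B * x ^ 2 / 2)),
        exp_pos (-(C * x ^ 2 / 2)), exp_pos (-(m/2) * x ^ 2)]
    calc |p * exp (-(A * x ^ 2 / 2)) + q * exp (-(B * x ^ 2 / 2)) - exp (-(C * x ^ 2 / 2))|
          * x ^ (-a - 1)
        ≤ ((p + q + 1) * exp (-(m/2) * x ^ 2)) * 1 :=
          mul_le_mul hNle hxle hxp.le (by positivity)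
      _ = (p + q + 1) * exp (-(m/2) * x ^ 2) := mul_one _


lemma key_value (ha0 : 0 < a) (ha2 : a < 2)
    (hA : 0 < A) (hB : 0 < B) (hC : 0 < C) (hp : 0 < p) (hq : 0 < q) (hpq : p + q = 1) :
    ∫ x in Ioi (0:ℝ), (p * exp (-(A * x ^ 2 / 2)) + q * exp (-(B * x ^ 2 / 2))
        - exp (-(C * x ^ 2 / 2))) * x ^ (-a - 1)
      = 2 ^ (-1 - a / 2) * Gamma (-(a / 2))
          * (p * A ^ (a / 2) + q * B ^ (a / 2) - C ^ (a / 2)) := by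
  have ha0' : a ≠ 0 := ha0.ne'
  set N : ℝ → ℝ := fun x => p * exp (-(A * x ^ 2 / 2)) + q * exp (-(B * x ^ 2 / 2))
      - exp (-(C * x ^ 2 / 2)) with hN
  set h : ℝ → ℝ := fun x => N x * x ^ (-a - 1) with hh
  set G : ℝ → ℝ := fun x => (C * exp (-(C * x ^ 2 / 2)) - p * A * exp (-(A * x ^ 2 / 2))
      - q * B * exp (-(B * x ^ 2 / 2))) * x ^ (1 - a) with hG
  set F : ℝ → ℝ := fun x => N x * x ^ (-a) with hF
  have hhint : IntegrableOn h (Ioi 0) := key_integrable ha0 ha2 hA hB hC hp hq hpq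
  -- component integrability
  have t1 : IntegrableOn (fun x : ℝ => x ^ (1-a) * exp (-(A/2) * x ^ 2)) (Ioi 0) :=
    integrableOn_rpow_mul_exp_neg_mul_sq (by linarith) (by linarith)
  have t2 : IntegrableOn (fun x : ℝ => x ^ (1-a) * exp (-(B/2) * x ^ 2)) (Ioi 0) :=
    integrableOn_rpow_mul_exp_neg_mul_sq (by linarith) (by linarith)
  have t3 : IntegrableOn (fun x : ℝ => x ^ (1-a) * exp (-(C/2) * x ^ 2)) (Ioi 0) :=
    integrableOn_rpow_mul_exp_neg_mul_sq (by linarith) (by linarith)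
  have hGeq : ∀ x : ℝ, G x = C * (x ^ (1-a) * exp (-(C/2) * x ^ 2))
      - p * A * (x ^ (1-a) * exp (-(A/2) * x ^ 2)) - q * B * (x ^ (1-a) * exp (-(B/2) * x ^ 2)) := by
    intro x
    rw [hG]
    rw [show -(A/2) * x ^ 2 = -(A * x ^ 2 / 2) by ring, show -(B/2) * x ^ 2 = -(B * x ^ 2 / 2) by ring,
      show -(C/2) * x ^ 2 = -(C * x ^ 2 / 2) by ring]
    ring
  have hGint : IntegrableOn G (Ioi 0) := by
    refine IntegrableOn.congr_fun (((t3.const_mul C).sub (t1.const_mul (p*A))).sub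
      (t2.const_mul (q*B))) (fun x _ => ?_) measurableSet_Ioi
    simp only [Pi.sub_apply]
    rw [hGeq x]
  -- derivative
  have hder : ∀ x ∈ Ioi (0:ℝ), HasDerivAt F (G x + (-a) * h x) x := by
    intro x hx
    have hx0 : (0:ℝ) < x := hx
    have dexp : ∀ θ : ℝ, HasDerivAt (fun y : ℝ => exp (-(θ * y ^ 2 / 2)))
        (exp (-(θ * x ^ 2 / 2)) * (-(θ * x))) x := by
      intro θ
      have h1 : HasDerivAt (fun y : ℝ => -(θ * y ^ 2 / 2)) (-(θ * x)) x := by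
        have := (((hasDerivAt_pow 2 x).const_mul θ).div_const 2).neg
        have e : (-fun x => θ * x ^ 2 / 2) = fun y : ℝ => -(θ * y ^ 2 / 2) := by funext y; simp
        rw [e] at this
        exact this.congr_deriv (by push_cast; ring)
      exact h1.exp
    have dN : HasDerivAt N (p * (exp (-(A * x ^ 2 / 2)) * (-(A * x)))
        + q * (exp (-(B * x ^ 2 / 2)) * (-(B * x)))
        - exp (-(C * x ^ 2 / 2)) * (-(C * x))) x :=
      (((dexp A).const_mul p).add ((dexp B).const_mul q)).sub (dexp C)
    have dR : HasDerivAt (fun y : ℝ => y ^ (-a)) ((-a) * x ^ (-a - 1)) x := by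
      exact Real.hasDerivAt_rpow_const (Or.inl hx0.ne')
    have hmul := dN.mul dR
    have hx1a : x ^ (1 - a) = x * x ^ (-a) := by
      rw [show (1:ℝ) - a = 1 + (-a) by ring, rpow_add hx0, rpow_one]
    have hxm : x ^ (-a) = x * x ^ (-a - 1) := by
      have e := rpow_add hx0 1 (-a - 1)
      rw [rpow_one] at e
      rw [← e]
      congr 1; ring
    refine hmul.congr_deriv ?_
    simp only [hG, hh, hN]
    rw [hx1a]
    ring
  -- value of F at 0 and continuity
  have hF0 : F 0 = 0 := by
    rw [hF]
    simp [zero_rpow (show -a ≠ 0 by simpa using ha0')]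
  set K : ℝ := (p * |A - C| + q * |B - C|) / 2 with hK
  have hK0 : 0 ≤ K := by positivity
  have hcont0 : ContinuousWithinAt F (Ici 0) 0 := by
    rw [ContinuousWithinAt, hF0]
    apply squeeze_zero_norm' (a := fun x => K * x ^ (2 - a))
    · filter_upwards [self_mem_nhdsWithin] with x (hx : x ∈ Ici 0)
      rcases eq_or_lt_of_le (mem_Ici.1 hx) with rfl | hx0
      · rw [hF0]
        simp [zero_rpow (show (2:ℝ) - a ≠ 0 by intro hc; exact absurd (by linarith : a = 2) (by linarith))]
      · have hxp : (0:ℝ) ≤ x ^ (-a) := (rpow_pos_of_pos hx0 _).le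
        have hNb := N_bound hA hB hC hp hq hpq x
        have hpow : x ^ 2 * x ^ (-a) = x ^ (2 - a) := by
          rw [← rpow_two, ← rpow_add hx0]; congr 1 <;> ring
        rw [hF, norm_mul, norm_eq_abs, norm_eq_abs, abs_of_nonneg hxp]
        calc |N x| * x ^ (-a) ≤ (K * x ^ 2) * x ^ (-a) := by gcongr <;> exact hNb
          _ = K * x ^ (2 - a) := by rw [mul_assoc, hpow]
    · have hc : ContinuousAt (fun x : ℝ => K * x ^ (2 - a)) 0 := by
        have := Real.continuousAt_rpow_const 0 (2 - a) (Or.inr (by linarith))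
        exact this.const_mul K
      have := hc.continuousWithinAt (s := Ici (0:ℝ))
      rw [ContinuousWithinAt] at this
      convert this using 2
      rw [zero_rpow (show (2:ℝ) - a ≠ 0 by intro hc'; linarith [(by linarith : a = 2)]), mul_zero]
  -- limit at infinity
  have htop : Tendsto F atTop (𝓝 0) := by
    apply squeeze_zero_norm' (a := fun x => (p + q + 1) * x ^ (-a))
    · filter_upwards [eventually_gt_atTop (0:ℝ)] with x hx0
      have hxp : (0:ℝ) ≤ x ^ (-a) := (rpow_pos_of_pos hx0 _).le
      have hNb : |N x| ≤ p + q + 1 := by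
        rw [hN, abs_le]
        have e1 := exp_sq_le_one A x hA.le
        have e2 := exp_sq_le_one B x hB.le
        have e3 := exp_sq_le_one C x hC.le
        constructor <;> nlinarith [exp_pos (-(A * x ^ 2 / 2)), exp_pos (-(B * x ^ 2 / 2)),
          exp_pos (-(C * x ^ 2 / 2))]
      rw [hF, norm_mul, norm_eq_abs, norm_eq_abs, abs_of_nonneg hxp]
      gcongr
    · have := (tendsto_rpow_neg_atTop ha0).const_mul (p + q + 1)
      simpa using this
  -- IBP
  have hhint' : IntegrableOn (fun x => (-a) * h x) (Ioi 0) := hhint.const_mul (-a)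
  have hFderint : IntegrableOn (fun x => G x + (-a) * h x) (Ioi 0) := hGint.add hhint'
  have hI := integral_Ioi_of_hasDerivAt_of_tendsto hcont0 hder hFderint htop
  rw [hF0, sub_zero] at hI
  rw [integral_add hGint hhint', integral_const_mul] at hI
  -- value of the Gaussian moments
  have hval : ∀ θ : ℝ, 0 < θ → ∫ x in Ioi (0:ℝ), x ^ (1-a) * exp (-(θ/2) * x ^ 2)
      = (θ/2) ^ (a/2 - 1) * (1/2) * Gamma (1 - a/2) := by
    intro θ hθ
    have hint := integral_rpow_mul_exp_neg_mul_rpow (p := 2) (q := 1-a) (b := θ/2)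
      two_pos (by linarith) (by linarith)
    rw [show -((1:ℝ)-a+1)/2 = a/2 - 1 by ring, show ((1:ℝ)-a+1)/2 = 1 - a/2 by ring] at hint
    rw [← hint]
    refine setIntegral_congr_fun measurableSet_Ioi (fun x hx => ?_)
    rw [rpow_two]
  have hGamma : Gamma (1 - a/2) = (-(a/2)) * Gamma (-(a/2)) := by
    have hne : -(a/2) ≠ 0 := by simpa using (show a/2 ≠ 0 by positivity)
    have := Real.Gamma_add_one hne
    rw [show -(a/2) + 1 = 1 - a/2 by ring] at this
    exact this
  have hpow : ∀ θ : ℝ, 0 < θ → (θ/2 : ℝ) ^ (a/2 - 1) = (2/θ) * (θ ^ (a/2) * 2 ^ (-(a/2))) := by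
    intro θ hθ
    rw [rpow_sub (by positivity), rpow_one, div_rpow hθ.le (by norm_num), rpow_neg (by norm_num)]
    field_simp
  have hGval : ∫ x in Ioi (0:ℝ), G x
      = (-(a/2)) * Gamma (-(a/2)) * 2 ^ (-(a/2)) * (C ^ (a/2) - p * A ^ (a/2) - q * B ^ (a/2)) := by
    have e : ∫ x in Ioi (0:ℝ), G x = ∫ x in Ioi (0:ℝ),
        (C * (x ^ (1-a) * exp (-(C/2) * x ^ 2)) - p * A * (x ^ (1-a) * exp (-(A/2) * x ^ 2))
          - q * B * (x ^ (1-a) * exp (-(B/2) * x ^ 2))) :=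
      setIntegral_congr_fun measurableSet_Ioi (fun x _ => hGeq x)
    have u1 : Integrable (fun x : ℝ => C * (x ^ (1-a) * exp (-(C/2) * x ^ 2)))
        (volume.restrict (Ioi 0)) := t3.const_mul C
    have u2 : Integrable (fun x : ℝ => p * A * (x ^ (1-a) * exp (-(A/2) * x ^ 2)))
        (volume.restrict (Ioi 0)) := t1.const_mul (p*A)
    have u3 : Integrable (fun x : ℝ => q * B * (x ^ (1-a) * exp (-(B/2) * x ^ 2)))
        (volume.restrict (Ioi 0)) := t2.const_mul (q*B)
    have u12 : Integrable (fun x : ℝ => C * (x ^ (1-a) * exp (-(C/2) * x ^ 2))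
        - p * A * (x ^ (1-a) * exp (-(A/2) * x ^ 2))) (volume.restrict (Ioi 0)) := u1.sub u2
    rw [e, integral_sub u12 u3, integral_sub u1 u2,
      integral_const_mul, integral_const_mul, integral_const_mul,
      hval A hA, hval B hB, hval C hC, hGamma, hpow A hA, hpow B hB, hpow C hC]
    field_simp
    ring
  -- conclude
  have hX : ∫ x in Ioi (0:ℝ), h x = (∫ x in Ioi (0:ℝ), G x) / a := by
    rw [eq_div_iff ha0']
    linarith [hI]
  show ∫ x in Ioi (0:ℝ), h x = _
  rw [hX, hGval, show (2:ℝ) ^ (-1 - a/2) = (1/2) * 2 ^ (-(a/2)) by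
    rw [show (-1 - a/2 : ℝ) = -1 + -(a/2) by ring, rpow_add two_pos, rpow_neg_one]; ring]
  field_simp
  ring

end Key

end Helpers

/-- The RDTS (rapidly-decreasing tempered stable) Lévy density with parameters
`(a₊, a₋, C₊, C₋, θ₊, θ₋)`. -/
noncomputable def rdtsDensity (ap am Cp Cm tp tm : ℝ) (x : ℝ) : ℝ :=
  if 0 < x then Cp * exp (-(tp * x ^ 2 / 2)) * x ^ (-ap - 1)
  else if x < 0 then Cm * exp (-(tm * x ^ 2 / 2)) * |x| ^ (-am - 1)
  else 0

/-- α-divergence (α ≠ ±1) between two equivalent-martingale RDTS processes. -/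
theorem rdts_alpha_divergence (ap am Cp Cm lp lm mp mm T α p q : ℝ)
    (hap : ap ∈ Ioo (0:ℝ) 2) (hap1 : ap ≠ 1)
    (ham : am ∈ Ioo (0:ℝ) 2) (ham1 : am ≠ 1)
    (hCp : 0 < Cp) (hCm : 0 < Cm) (hlp : 0 < lp) (hlm : 0 < lm)
    (hmp : 0 < mp) (hmm : 0 < mm) (hT : 0 < T) (hα : α ∈ Ioo (-1:ℝ) 1)
    (hp : p = (1 - α) / 2) (hq : q = (1 + α) / 2)
    (r : ℝ → ℝ)
    (hrp : ∀ x : ℝ, 0 < x → r x = exp (-((lp - mp) * x ^ 2 / 2)))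
    (hrm : ∀ x : ℝ, x < 0 → r x = exp (-((lm - mm) * x ^ 2 / 2))) :
    (4 * T / (1 - α ^ 2)) *
        ∫ x : ℝ, (p * r x + q - r x ^ p) * rdtsDensity ap am Cp Cm mp mm x
      = (4 * T / (1 - α ^ 2)) *
        ((2:ℝ) ^ (-1 - ap / 2) * Cp * Gamma (-(ap / 2)) *
            (p * lp ^ (ap / 2) + q * mp ^ (ap / 2) - (p * lp + q * mp) ^ (ap / 2))
          + (2:ℝ) ^ (-1 - am / 2) * Cm * Gamma (-(am / 2)) *
            (p * lm ^ (am / 2) + q * mm ^ (am / 2) - (p * lm + q * mm) ^ (am / 2))) := by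
  obtain ⟨hap0, hap2⟩ := hap
  obtain ⟨ham0, ham2⟩ := ham
  obtain ⟨hα1, hα2⟩ := hα
  have hp0 : 0 < p := by rw [hp]; linarith
  have hq0 : 0 < q := by rw [hq]; linarith
  have hpq : p + q = 1 := by rw [hp, hq]; ring
  have hCp' : 0 < p * lp + q * mp := by positivity
  have hCm' : 0 < p * lm + q * mm := by positivity
  congr 1
  set f : ℝ → ℝ := fun x => (p * r x + q - r x ^ p) * rdtsDensity ap am Cp Cm mp mm x with hf
  set gP : ℝ → ℝ := fun x => Cp * ((p * exp (-(lp * x ^ 2 / 2)) + q * exp (-(mp * x ^ 2 / 2))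
      - exp (-((p * lp + q * mp) * x ^ 2 / 2))) * x ^ (-ap - 1)) with hgP
  set gM : ℝ → ℝ := fun x => Cm * ((p * exp (-(lm * x ^ 2 / 2)) + q * exp (-(mm * x ^ 2 / 2))
      - exp (-((p * lm + q * mm) * x ^ 2 / 2))) * x ^ (-am - 1)) with hgM
  have hfP : ∀ x : ℝ, 0 < x → f x = gP x := by
    intro x hx
    simp only [hf, hgP, rdtsDensity, if_pos hx, hrp x hx]
    have hrpow : exp (-((lp - mp) * x ^ 2 / 2)) ^ p = exp (-((lp - mp) * x ^ 2 / 2) * p) := by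
      rw [rpow_def_of_pos (exp_pos _), log_exp]
    rw [hrpow]
    have e1 : exp (-((lp - mp) * x ^ 2 / 2)) * exp (-(mp * x ^ 2 / 2)) = exp (-(lp * x ^ 2 / 2)) := by
      rw [← exp_add]; congr 1; ring
    have e2 : exp (-((lp - mp) * x ^ 2 / 2) * p) * exp (-(mp * x ^ 2 / 2))
        = exp (-((p * lp + q * mp) * x ^ 2 / 2)) := by
      rw [← exp_add]; congr 1; linear_combination (x ^ 2 * mp / 2) * hpq
    linear_combination (p * Cp * x ^ (-ap - 1)) * e1 - (Cp * x ^ (-ap - 1)) * e2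
  have hfM : ∀ x : ℝ, x < 0 → f x = gM (-x) := by
    intro x hx
    simp only [hf, hgM, rdtsDensity, if_neg (lt_asymm hx), if_pos hx, hrm x hx, neg_sq,
      abs_of_neg hx]
    have hrpow : exp (-((lm - mm) * x ^ 2 / 2)) ^ p = exp (-((lm - mm) * x ^ 2 / 2) * p) := by
      rw [rpow_def_of_pos (exp_pos _), log_exp]
    rw [hrpow]
    have e1 : exp (-((lm - mm) * x ^ 2 / 2)) * exp (-(mm * x ^ 2 / 2)) = exp (-(lm * x ^ 2 / 2)) := by
      rw [← exp_add]; congr 1; ring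
    have e2 : exp (-((lm - mm) * x ^ 2 / 2) * p) * exp (-(mm * x ^ 2 / 2))
        = exp (-((p * lm + q * mm) * x ^ 2 / 2)) := by
      rw [← exp_add]; congr 1; linear_combination (x ^ 2 * mm / 2) * hpq
    linear_combination (p * Cm * (-x) ^ (-am - 1)) * e1 - (Cm * (-x) ^ (-am - 1)) * e2
  have hIP : IntegrableOn gP (Ioi 0) :=
    (key_integrable hap0 hap2 hlp hmp hCp' hp0 hq0 hpq).const_mul Cp
  have hIM : IntegrableOn gM (Ioi 0) :=
    (key_integrable ham0 ham2 hlm hmm hCm' hp0 hq0 hpq).const_mul Cm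
  have hfIP : IntegrableOn f (Ioi 0) :=
    IntegrableOn.congr_fun hIP (fun x hx => (hfP x hx).symm) measurableSet_Ioi
  have hIMneg : IntegrableOn (fun x => gM (-x)) (Iio 0) := by
    have := hIM
    rw [← (Measure.measurePreserving_neg (volume : Measure ℝ)).integrableOn_comp_preimage
      (Homeomorph.neg ℝ).measurableEmbedding] at this
    simpa [neg_preimage, neg_Ioi, Function.comp_def] using this
  have hfIM : IntegrableOn f (Iio 0) :=
    IntegrableOn.congr_fun hIMneg (fun x hx => (hfM x hx).symm) measurableSet_Iio
  have hsplit : ∫ x, f x = (∫ x in Iio (0:ℝ), f x) + ∫ x in Ioi (0:ℝ), f x := by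
    have e1 : ∫ x, f x = ∫ x in Iio (0:ℝ) ∪ Ioi (0:ℝ), f x := by
      rw [Iio_union_Ioi,
        show (volume : Measure ℝ).restrict {(0:ℝ)}ᶜ = volume from
          restrict_compl_singleton 0]
    rw [e1, setIntegral_union ((Iio_disjoint_Ici (le_refl (0:ℝ))).mono_right Ioi_subset_Ici_self) measurableSet_Ioi hfIM hfIP]
  have hvP : ∫ x in Ioi (0:ℝ), f x
      = Cp * (2 ^ (-1 - ap/2) * Gamma (-(ap/2))
          * (p * lp ^ (ap/2) + q * mp ^ (ap/2) - (p * lp + q * mp) ^ (ap/2))) := by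
    rw [setIntegral_congr_fun measurableSet_Ioi (fun x hx => hfP x hx), hgP, integral_const_mul,
      key_value hap0 hap2 hlp hmp hCp' hp0 hq0 hpq]
  have hvM : ∫ x in Iio (0:ℝ), f x
      = Cm * (2 ^ (-1 - am/2) * Gamma (-(am/2))
          * (p * lm ^ (am/2) + q * mm ^ (am/2) - (p * lm + q * mm) ^ (am/2))) := by
    rw [setIntegral_congr_fun measurableSet_Iio (fun x hx => hfM x hx)]
    rw [← integral_Iic_eq_integral_Iio]
    rw [integral_comp_neg_Iic]
    rw [neg_zero]
    rw [hgM, integral_const_mul, key_value ham0 ham2 hlm hmm hCm' hp0 hq0 hpq]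
  rw [hsplit, hvP, hvM]
  ring
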